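/- Let U = span⟨I, E₁₂⟩ ≤ M₂(ℂ). Then for all g, h ∈ GL₂(ℂ), gUg⁻¹ + hUh⁻¹ ≠ M₂(ℂ); but there exist g₁, g₂, g₃ ∈ GL₂(ℂ) with g₁Ug₁⁻¹ + g₂Ug₂⁻¹ + g₃Ug₃⁻¹ = M₂(ℂ). Hence the GL₂(ℂ)-additive diameter of M₂(ℂ) with respect to U is 3. -/

import Mathlib

/-- Conjugation by `g ∈ GL_n(ℂ)` as a linear map `x ↦ g x g⁻¹`. -/
noncomputable def glConj {n : ℕ} (g : GL (Fin n) ℂ) :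
    Matrix (Fin n) (Fin n) ℂ →ₗ[ℂ] Matrix (Fin n) (Fin n) ℂ where
  toFun x := (g : Matrix (Fin n) (Fin n) ℂ) * x * ((g⁻¹ : GL (Fin n) ℂ) : Matrix (Fin n) (Fin n) ℂ)
  map_add' x y := by simp [Matrix.mul_add, Matrix.add_mul]
  map_smul' c x := by simp [Matrix.mul_smul, Matrix.smul_mul]

/-- `U = span⟨I, E₁₂⟩ ≤ M₂(ℂ)`. -/
noncomputable def U12 : Submodule ℂ (Matrix (Fin 2) (Fin 2) ℂ) :=
  Submodule.span ℂ {(1 : Matrix (Fin 2) (Fin 2) ℂ), Matrix.single 0 1 1}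

lemma finrank_U12_le : Module.finrank ℂ U12 ≤ 2 := by
  classical
  refine (finrank_span_le_card _).trans ?_
  rw [Set.toFinset_insert, Set.toFinset_singleton]
  exact (Finset.card_insert_le _ _).trans (by simp)

lemma glConj_one (g : GL (Fin 2) ℂ) : glConj g 1 = 1 := by
  show (g : Matrix (Fin 2) (Fin 2) ℂ) * 1 * _ = 1
  rw [mul_one]
  exact g.mul_inv

lemma part1 (g h : GL (Fin 2) ℂ) :
    Submodule.map (glConj g) U12 ⊔ Submodule.map (glConj h) U12 ≠ ⊤ := by
  intro hcon
  have h4 : Module.finrank ℂ (Matrix (Fin 2) (Fin 2) ℂ) = 4 := by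
    simp [Module.finrank_matrix]
  set A := Submodule.map (glConj g) U12 with hAdef
  set B := Submodule.map (glConj h) U12 with hBdef
  have hA : Module.finrank ℂ A ≤ 2 := (Submodule.finrank_map_le _ _).trans finrank_U12_le
  have hB : Module.finrank ℂ B ≤ 2 := (Submodule.finrank_map_le _ _).trans finrank_U12_le
  have hI : (1 : Matrix (Fin 2) (Fin 2) ℂ) ∈ A ⊓ B := by
    constructor
    · exact ⟨1, Submodule.subset_span (by simp), glConj_one g⟩
    · exact ⟨1, Submodule.subset_span (by simp), glConj_one h⟩
  have hpos : 0 < Module.finrank ℂ (A ⊓ B : Submodule ℂ _) := by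
    rw [Nat.lt_iff_add_one_le, zero_add, Submodule.one_le_finrank_iff]
    intro hbot
    rw [hbot] at hI
    simp at hI

  have key := Submodule.finrank_sup_add_finrank_inf_eq A B
  rw [hcon] at key
  rw [finrank_top, h4] at key
  omega

noncomputable def gSwap : GL (Fin 2) ℂ :=
  ⟨!![0,1;1,0], !![0,1;1,0],
    by ext i j; fin_cases i <;> fin_cases j <;>
      simp [Matrix.mul_apply, Fin.sum_univ_two, Matrix.one_apply],
    by ext i j; fin_cases i <;> fin_cases j <;>
      simp [Matrix.mul_apply, Fin.sum_univ_two, Matrix.one_apply]⟩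

noncomputable def gLow : GL (Fin 2) ℂ :=
  ⟨!![1,0;1,1], !![1,0;-1,1],
    by ext i j; fin_cases i <;> fin_cases j <;>
      simp [Matrix.mul_apply, Fin.sum_univ_two, Matrix.one_apply],
    by ext i j; fin_cases i <;> fin_cases j <;>
      simp [Matrix.mul_apply, Fin.sum_univ_two, Matrix.one_apply]⟩

lemma E12_eq : (Matrix.single 0 1 1 : Matrix (Fin 2) (Fin 2) ℂ) = !![0,1;0,0] := by
  ext i j
  fin_cases i <;> fin_cases j <;> simp [Matrix.single]

lemma part2 :
    Submodule.map (glConj (1 : GL (Fin 2) ℂ)) U12 ⊔ Submodule.map (glConj gSwap) U12 ⊔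
      Submodule.map (glConj gLow) U12 = ⊤ := by
  set S := Submodule.map (glConj (1 : GL (Fin 2) ℂ)) U12 ⊔ Submodule.map (glConj gSwap) U12 ⊔
      Submodule.map (glConj gLow) U12 with hS
  have hEmem : (Matrix.single 0 1 1 : Matrix (Fin 2) (Fin 2) ℂ) ∈ U12 :=
    Submodule.subset_span (by simp)
  have h1 : (1 : Matrix (Fin 2) (Fin 2) ℂ) ∈ S :=
    Submodule.mem_sup_left <| Submodule.mem_sup_left
      ⟨1, Submodule.subset_span (by simp), glConj_one 1⟩
  have h12 : (!![0,1;0,0] : Matrix (Fin 2) (Fin 2) ℂ) ∈ S := by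
    refine Submodule.mem_sup_left <| Submodule.mem_sup_left ⟨_, hEmem, ?_⟩
    show (1 : Matrix (Fin 2) (Fin 2) ℂ) * _ * (1 : Matrix (Fin 2) (Fin 2) ℂ) = _
    rw [E12_eq, one_mul, mul_one]
  have h21 : (!![0,0;1,0] : Matrix (Fin 2) (Fin 2) ℂ) ∈ S := by
    refine Submodule.mem_sup_left <| Submodule.mem_sup_right ⟨_, hEmem, ?_⟩
    show (!![0,1;1,0] : Matrix (Fin 2) (Fin 2) ℂ) * _ * !![0,1;1,0] = _
    rw [E12_eq]
    ext i j; fin_cases i <;> fin_cases j <;> simp [Matrix.mul_apply, Fin.sum_univ_two]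
  have hM : (!![-1,1;-1,1] : Matrix (Fin 2) (Fin 2) ℂ) ∈ S := by
    refine Submodule.mem_sup_right ⟨_, hEmem, ?_⟩
    show (!![1,0;1,1] : Matrix (Fin 2) (Fin 2) ℂ) * _ * !![1,0;-1,1] = _
    rw [E12_eq]
    ext i j; fin_cases i <;> fin_cases j <;> simp [Matrix.mul_apply, Fin.sum_univ_two]
  have h11 : (!![1,0;0,0] : Matrix (Fin 2) (Fin 2) ℂ) ∈ S := by
    have : (!![1,0;0,0] : Matrix (Fin 2) (Fin 2) ℂ) =
        (1/2 : ℂ) • ((1 : Matrix (Fin 2) (Fin 2) ℂ) - !![-1,1;-1,1] + !![0,1;0,0] - !![0,0;1,0]) := by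
      ext i j
      fin_cases i <;> fin_cases j <;> simp [Matrix.one_apply] <;> norm_num
    rw [this]
    exact S.smul_mem _ (S.sub_mem (S.add_mem (S.sub_mem h1 hM) h12) h21)
  have h22 : (!![0,0;0,1] : Matrix (Fin 2) (Fin 2) ℂ) ∈ S := by
    have : (!![0,0;0,1] : Matrix (Fin 2) (Fin 2) ℂ) = 1 - !![1,0;0,0] := by
      ext i j
      fin_cases i <;> fin_cases j <;> simp [Matrix.one_apply]
    rw [this]
    exact S.sub_mem h1 h11
  rw [Submodule.eq_top_iff']
  intro x
  have hx : x = x 0 0 • !![1,0;0,0] + x 0 1 • !![0,1;0,0] + x 1 0 • !![0,0;1,0]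
      + x 1 1 • !![0,0;0,1] := by
    ext i j
    fin_cases i <;> fin_cases j <;> simp
  rw [hx]
  exact S.add_mem (S.add_mem (S.add_mem (S.smul_mem _ h11) (S.smul_mem _ h12))
    (S.smul_mem _ h21)) (S.smul_mem _ h22)

theorem stmt_13 :
    (∀ g h : GL (Fin 2) ℂ,
      Submodule.map (glConj g) U12 ⊔ Submodule.map (glConj h) U12 ≠ ⊤) ∧
    (∃ g₁ g₂ g₃ : GL (Fin 2) ℂ,
      Submodule.map (glConj g₁) U12 ⊔ Submodule.map (glConj g₂) U12 ⊔
        Submodule.map (glConj g₃) U12 = ⊤) := by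
  exact ⟨part1, 1, gSwap, gLow, part2⟩
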